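/- Let d ≥ 5. There exists a constant C > 0, depending only on d, such that for all u, v ∈ ℤ^d: Σ_{w∈ℤ^d} ⟨w⟩^{4−2d} ⟨w−v⟩^{2−d} ⟨w−u⟩^{2−d} ≤ C ⟨v⟩^{2−d} ⟨u⟩^{2−d}. -/

import Mathlib

open scoped BigOperators

/-- Euclidean norm of a point of `ℤ^d`. -/
noncomputable def znorm {d : ℕ} (x : Fin d → ℤ) : ℝ :=
  Real.sqrt (∑ i, ((x i : ℝ)) ^ 2)

/-- `⟨x⟩ = max(|x|, 1)`. -/
noncomputable def zbra {d : ℕ} (x : Fin d → ℤ) : ℝ := max (znorm x) 1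

lemma one_le_zbra {d : ℕ} (x : Fin d → ℤ) : 1 ≤ zbra x := le_max_right _ _

lemma zbra_pos {d : ℕ} (x : Fin d → ℤ) : 0 < zbra x :=
  lt_of_lt_of_le one_pos (one_le_zbra x)

lemma znorm_eq_norm {d : ℕ} (x : Fin d → ℤ) :
    znorm x = ‖(WithLp.equiv 2 (Fin d → ℝ)).symm (fun i => (x i : ℝ))‖ := by
  rw [EuclideanSpace.norm_eq]
  unfold znorm
  congr 1
  refine Finset.sum_congr rfl fun i _ => ?_
  simp [WithLp.equiv_symm_apply, PiLp.toLp_apply, Real.norm_eq_abs, sq_abs]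

lemma znorm_sub_le {d : ℕ} (x y : Fin d → ℤ) : znorm x ≤ znorm (x - y) + znorm y := by
  rw [znorm_eq_norm, znorm_eq_norm, znorm_eq_norm]
  have hxy : ((WithLp.equiv 2 (Fin d → ℝ)).symm (fun i => (x i : ℝ))) =
      ((WithLp.equiv 2 (Fin d → ℝ)).symm (fun i => ((x - y) i : ℝ))) +
      ((WithLp.equiv 2 (Fin d → ℝ)).symm (fun i => (y i : ℝ))) := by
    rw [WithLp.equiv_symm_apply, ← WithLp.toLp_add]
    congr 1
    funext i
    show (x i : ℝ) = ((x i - y i : ℤ) : ℝ) + (y i : ℝ)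
    push_cast
    ring
  rw [hxy]
  exact norm_add_le _ _

lemma zbra_triangle {d : ℕ} (v w : Fin d → ℤ) : zbra v ≤ zbra w + zbra (w - v) := by
  have h1 : znorm v ≤ znorm (v - w) + znorm w := znorm_sub_le v w
  have h2 : znorm (v - w) = znorm (w - v) := by
    unfold znorm
    congr 1
    refine Finset.sum_congr rfl fun i _ => ?_
    have : ((v - w) i : ℝ) = -(((w - v) i : ℝ)) := by
      show ((v i - w i : ℤ) : ℝ) = -((w i - v i : ℤ) : ℝ)
      push_cast; ring
    rw [this, neg_sq]
  have h3 : znorm w ≤ zbra w := le_max_left _ _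
  have h4 : znorm (w - v) ≤ zbra (w - v) := le_max_left _ _
  have h5 : (1 : ℝ) ≤ zbra w + zbra (w - v) := by
    have := one_le_zbra w; have := one_le_zbra (w - v); linarith
  refine max_le ?_ h5
  rw [h2] at h1
  linarith

lemma key_core {A B C P Q T : ℝ} (hA : 0 < A) (hB : 0 < B) (hC : 0 < C)
    (hP : 0 < P) (hQ : 0 < Q) (hT : 0 < T)
    (h1 : A ≤ T * P ∨ B ≤ T * P) (h2 : A ≤ T * Q ∨ C ≤ T * Q) :
    A * A * B * C ≤ T * T * P * Q * (A * A + B * B + C * C) := by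
  have hTP : (0:ℝ) ≤ T * P := by positivity
  have hTQ : (0:ℝ) ≤ T * Q := by positivity
  have hTPQ : (0:ℝ) ≤ T * P * (T * Q) := by positivity
  rcases h1 with h1 | h1 <;> rcases h2 with h2 | h2
  · have k1 : A * A ≤ T * P * (T * Q) := mul_le_mul h1 h2 hA.le hTP
    have k2 : B * C ≤ A * A + B * B + C * C := by nlinarith [sq_nonneg (B - C), mul_pos hA hA]
    calc A * A * B * C = (A * A) * (B * C) := by ring
      _ ≤ (T * P * (T * Q)) * (A * A + B * B + C * C) :=
          mul_le_mul k1 k2 (by positivity) hTPQ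
      _ = T * T * P * Q * (A * A + B * B + C * C) := by ring
  · have k1 : A * C ≤ T * P * (T * Q) := mul_le_mul h1 h2 hC.le hTP
    have k2 : A * B ≤ A * A + B * B + C * C := by nlinarith [sq_nonneg (A - B), mul_pos hC hC]
    calc A * A * B * C = (A * C) * (A * B) := by ring
      _ ≤ (T * P * (T * Q)) * (A * A + B * B + C * C) :=
          mul_le_mul k1 k2 (by positivity) hTPQ
      _ = T * T * P * Q * (A * A + B * B + C * C) := by ring
  · have k1 : B * A ≤ T * P * (T * Q) := mul_le_mul h1 h2 hA.le hTP
    have k2 : A * C ≤ A * A + B * B + C * C := by nlinarith [sq_nonneg (A - C), mul_pos hB hB]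
    calc A * A * B * C = (B * A) * (A * C) := by ring
      _ ≤ (T * P * (T * Q)) * (A * A + B * B + C * C) :=
          mul_le_mul k1 k2 (by positivity) hTPQ
      _ = T * T * P * Q * (A * A + B * B + C * C) := by ring
  · have k1 : B * C ≤ T * P * (T * Q) := mul_le_mul h1 h2 hC.le hTP
    have k2 : A * A ≤ A * A + B * B + C * C := by nlinarith [mul_pos hB hB, mul_pos hC hC]
    calc A * A * B * C = (B * C) * (A * A) := by ring
      _ ≤ (T * P * (T * Q)) * (A * A + B * B + C * C) :=
          mul_le_mul k1 k2 (by positivity) hTPQ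
      _ = T * T * P * Q * (A * A + B * B + C * C) := by ring

lemma rpow_half {e : ℝ} (he : e ≤ 0) {x y : ℝ} (hy : 0 < y) (h : y / 2 ≤ x) :
    x ^ e ≤ (2:ℝ) ^ (-e) * y ^ e := by
  have hy2 : (0:ℝ) < y / 2 := by linarith
  have h1 : x ^ e ≤ (y / 2) ^ e := Real.rpow_le_rpow_of_nonpos hy2 h he
  have h2 : (y / 2 : ℝ) ^ e = (2:ℝ) ^ (-e) * y ^ e := by
    rw [Real.div_rpow hy.le (by norm_num : (0:ℝ) ≤ 2),
      Real.rpow_neg (by norm_num : (0:ℝ) ≤ 2), div_eq_mul_inv, mul_comm]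
  linarith

lemma key {e : ℝ} (he : e ≤ 0) {a b c p q : ℝ} (ha : 1 ≤ a) (hb : 1 ≤ b) (hc : 1 ≤ c)
    (hp : 1 ≤ p) (hq : 1 ≤ q) (hpb : p ≤ a + b) (hqc : q ≤ a + c) :
    a ^ (2*e) * b ^ e * c ^ e ≤
      (2:ℝ) ^ (-(2*e)) * p ^ e * q ^ e * (a ^ (2*e) + b ^ (2*e) + c ^ (2*e)) := by
  have ha0 : (0:ℝ) < a := by linarith
  have hb0 : (0:ℝ) < b := by linarith
  have hc0 : (0:ℝ) < c := by linarith
  have hp0 : (0:ℝ) < p := by linarith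
  have hq0 : (0:ℝ) < q := by linarith
  have hsplit : ∀ z : ℝ, 0 < z → z ^ (2*e) = z ^ e * z ^ e := fun z hz => by
    rw [← Real.rpow_add hz]; ring_nf
  have hT : (2:ℝ) ^ (-(2*e)) = (2:ℝ) ^ (-e) * (2:ℝ) ^ (-e) := by
    rw [← Real.rpow_add two_pos]; ring_nf
  rw [hsplit a ha0, hsplit b hb0, hsplit c hc0, hT]
  have h1 : a ^ e ≤ (2:ℝ) ^ (-e) * p ^ e ∨ b ^ e ≤ (2:ℝ) ^ (-e) * p ^ e := by
    rcases le_or_gt (p / 2) a with h | h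
    · exact Or.inl (rpow_half he hp0 h)
    · exact Or.inr (rpow_half he hp0 (by linarith))
  have h2 : a ^ e ≤ (2:ℝ) ^ (-e) * q ^ e ∨ c ^ e ≤ (2:ℝ) ^ (-e) * q ^ e := by
    rcases le_or_gt (q / 2) a with h | h
    · exact Or.inl (rpow_half he hq0 h)
    · exact Or.inr (rpow_half he hq0 (by linarith))
  exact key_core (Real.rpow_pos_of_pos ha0 e) (Real.rpow_pos_of_pos hb0 e)
    (Real.rpow_pos_of_pos hc0 e) (Real.rpow_pos_of_pos hp0 e)
    (Real.rpow_pos_of_pos hq0 e) (Real.rpow_pos_of_pos two_pos (-e)) h1 h2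

lemma summable_gint {r : ℝ} (hr : 1 < r) :
    Summable (fun n : ℤ => (max |(n:ℝ)| 1) ^ (-r)) := by
  have h0 : Summable (fun n : ℤ => |(n:ℝ)| ^ (-r) + if n = 0 then (1:ℝ) else 0) := by
    refine (Real.summable_abs_int_rpow hr).add ?_
    refine summable_of_ne_finset_zero (s := {0}) fun n hn => ?_
    simp only [Finset.mem_singleton] at hn
    simp [hn]
  refine Summable.of_nonneg_of_le (fun n => Real.rpow_nonneg (by positivity) _) ?_ h0
  intro n
  rcases eq_or_ne n 0 with rfl | hn
  · have : -r ≠ 0 := by linarith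
    simp [Real.zero_rpow this]
  · have h1 : (1:ℝ) ≤ |(n:ℝ)| := by
      have := Int.one_le_abs hn
      calc (1:ℝ) = ((1:ℤ):ℝ) := by norm_num
        _ ≤ ((|n|:ℤ):ℝ) := by exact_mod_cast this
        _ = |(n:ℝ)| := by push_cast; ring
    rw [max_eq_left h1]
    simp [hn]

lemma summable_pi_prod {g : ℤ → ℝ} (hg0 : ∀ n, 0 ≤ g n) (hg : Summable g) :
    ∀ m : ℕ, Summable (fun w : Fin m → ℤ => ∏ i, g (w i)) := by
  intro m
  induction m with
  | zero =>
    have : (fun w : Fin 0 → ℤ => ∏ i, g (w i)) = fun _ => 1 := by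
      funext w; simp
    rw [this]
    exact Summable.of_finite
  | succ n ih =>
    have hs : Summable (fun p : ℤ × (Fin n → ℤ) => g p.1 * ∏ i, g (p.2 i)) :=
      Summable.mul_of_nonneg (f := g) (g := fun w : Fin n → ℤ => ∏ i, g (w i))
        hg ih hg0 (fun w => Finset.prod_nonneg fun i _ => hg0 _)
    refine (Equiv.summable_iff (f := fun w : Fin (n+1) → ℤ => ∏ i, g (w i))
      (Fin.consEquiv (fun _ : Fin (n+1) => ℤ))).mp (hs.congr fun p => ?_)
    simp [Fin.consEquiv, Fin.prod_univ_succ]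

lemma zbra_comp_le {d : ℕ} (x : Fin d → ℤ) (i : Fin d) : max |(x i : ℝ)| 1 ≤ zbra x := by
  refine max_le ?_ (one_le_zbra x)
  have h1 : |(x i : ℝ)| = Real.sqrt ((x i : ℝ) ^ 2) := (Real.sqrt_sq_eq_abs _).symm
  have h2 : ((x i : ℝ)) ^ 2 ≤ ∑ j, ((x j : ℝ)) ^ 2 :=
    Finset.single_le_sum (f := fun j => ((x j : ℝ)) ^ 2)
      (fun j _ => sq_nonneg _) (Finset.mem_univ i)
  calc |(x i : ℝ)| = Real.sqrt ((x i : ℝ) ^ 2) := h1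
    _ ≤ Real.sqrt (∑ j, ((x j : ℝ)) ^ 2) := Real.sqrt_le_sqrt h2
    _ = znorm x := rfl
    _ ≤ zbra x := le_max_left _ _

lemma summable_shift {d : ℕ} (f : (Fin d → ℤ) → ℝ) (hg : Summable f) (v : Fin d → ℤ) :
    Summable (fun w : Fin d → ℤ => f (w - v)) :=
  (Equiv.summable_iff (Equiv.subRight v)).mpr hg

lemma tsum_shift {d : ℕ} (f : (Fin d → ℤ) → ℝ) (v : Fin d → ℤ) :
    (∑' w : Fin d → ℤ, f (w - v)) = ∑' w, f w :=
  Equiv.tsum_eq (Equiv.subRight v) f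

lemma summable_zbra (d : ℕ) (hd : 5 ≤ d) :
    Summable (fun w : Fin d → ℤ => zbra w ^ ((4:ℝ) - 2*d)) := by
  have hd5 : (5:ℝ) ≤ (d:ℝ) := by exact_mod_cast hd
  have hd0 : (0:ℝ) < (d:ℝ) := by linarith
  set r : ℝ := (2*(d:ℝ) - 4)/d with hr_def
  have hr : 1 < r := by
    rw [hr_def, lt_div_iff₀ hd0]
    linarith
  have hr0 : 0 < r := by linarith
  have hgs := summable_pi_prod (g := fun n : ℤ => (max |(n:ℝ)| 1) ^ (-r))
    (fun n => Real.rpow_nonneg (by positivity) _) (summable_gint hr) d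
  refine Summable.of_nonneg_of_le (fun w => Real.rpow_nonneg (zbra_pos w).le _) ?_ hgs
  intro w
  have hprodpos : (0:ℝ) < ∏ i, max |(w i : ℝ)| 1 :=
    Finset.prod_pos fun i _ => by positivity
  have h1 : (∏ i, max |(w i : ℝ)| 1) ≤ zbra w ^ (d:ℕ) := by
    calc (∏ i, max |(w i : ℝ)| 1) ≤ ∏ _i : Fin d, zbra w :=
        Finset.prod_le_prod (fun i _ => by positivity) (fun i _ => zbra_comp_le w i)
      _ = zbra w ^ (d:ℕ) := by
        rw [Finset.prod_const, Finset.card_univ, Fintype.card_fin]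
  calc zbra w ^ ((4:ℝ) - 2*d) = (zbra w ^ (d:ℕ)) ^ (-r) := by
        rw [← Real.rpow_natCast (zbra w) d, ← Real.rpow_mul (zbra_pos w).le]
        congr 1
        rw [hr_def]
        field_simp
        ring
    _ ≤ (∏ i, max |(w i : ℝ)| 1) ^ (-r) :=
        Real.rpow_le_rpow_of_nonpos hprodpos h1 (by linarith)
    _ = ∏ i, (max |(w i : ℝ)| 1) ^ (-r) :=
        (Real.finset_prod_rpow _ _ (fun i _ => by positivity) _).symm

/-- For `d ≥ 5` there is a constant `C > 0`, depending only on `d`, with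
`Σ_w ⟨w⟩^{4−2d} ⟨w−v⟩^{2−d} ⟨w−u⟩^{2−d} ≤ C ⟨v⟩^{2−d} ⟨u⟩^{2−d}` for all `u, v ∈ ℤ^d`. -/
theorem stmt_10 (d : ℕ) (hd : 5 ≤ d) :
    ∃ C > (0 : ℝ), ∀ u v : Fin d → ℤ,
      Summable (fun w : Fin d → ℤ =>
        zbra w ^ ((4 : ℝ) - 2 * d) * zbra (w - v) ^ ((2 : ℝ) - d) *
          zbra (w - u) ^ ((2 : ℝ) - d)) ∧
      (∑' w : Fin d → ℤ,
        zbra w ^ ((4 : ℝ) - 2 * d) * zbra (w - v) ^ ((2 : ℝ) - d) *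
          zbra (w - u) ^ ((2 : ℝ) - d))
        ≤ C * zbra v ^ ((2 : ℝ) - d) * zbra u ^ ((2 : ℝ) - d) := by
  have hd5 : (5:ℝ) ≤ (d:ℝ) := by exact_mod_cast hd
  have he : (2:ℝ) - (d:ℝ) ≤ 0 := by linarith
  have hg : Summable (fun w : Fin d → ℤ => zbra w ^ ((4:ℝ) - 2*d)) := summable_zbra d hd
  set K : ℝ := (2:ℝ) ^ (2*(d:ℝ) - 4) with hK
  have hKpos : 0 < K := Real.rpow_pos_of_pos two_pos _
  set S : ℝ := ∑' w : Fin d → ℤ, zbra w ^ ((4:ℝ) - 2*d) with hS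
  have hS0 : 0 ≤ S :=
    tsum_nonneg fun w => Real.rpow_nonneg (zbra_pos w).le _
  refine ⟨K * (3*S + 1), mul_pos hKpos (by linarith), fun u v => ?_⟩
  have hgv : Summable (fun w : Fin d → ℤ => zbra (w - v) ^ ((4:ℝ) - 2*d)) :=
    summable_shift (fun w => zbra w ^ ((4:ℝ) - 2*d)) hg v
  have hgu : Summable (fun w : Fin d → ℤ => zbra (w - u) ^ ((4:ℝ) - 2*d)) :=
    summable_shift (fun w => zbra w ^ ((4:ℝ) - 2*d)) hg u
  set F : (Fin d → ℤ) → ℝ := fun w =>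
    zbra w ^ ((4:ℝ) - 2*d) * zbra (w - v) ^ ((2:ℝ) - d) * zbra (w - u) ^ ((2:ℝ) - d) with hF
  have hF0 : ∀ w, 0 ≤ F w := fun w =>
    mul_nonneg (mul_nonneg (Real.rpow_nonneg (zbra_pos w).le _)
      (Real.rpow_nonneg (zbra_pos _).le _)) (Real.rpow_nonneg (zbra_pos _).le _)
  have hbd : ∀ w, F w ≤ K * zbra v ^ ((2:ℝ) - d) * zbra u ^ ((2:ℝ) - d) *
      (zbra w ^ ((4:ℝ) - 2*d) + zbra (w - v) ^ ((4:ℝ) - 2*d) + zbra (w - u) ^ ((4:ℝ) - 2*d)) := by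
    intro w
    have h1 := key (e := (2:ℝ) - d) he (one_le_zbra w) (one_le_zbra (w - v))
      (one_le_zbra (w - u)) (one_le_zbra v) (one_le_zbra u)
      (zbra_triangle v w) (zbra_triangle u w)
    have h2 : (2:ℝ) * ((2:ℝ) - (d:ℝ)) = (4:ℝ) - 2*(d:ℝ) := by ring
    have h3 : -((4:ℝ) - 2*(d:ℝ)) = 2*(d:ℝ) - 4 := by ring
    rw [h2, h3, ← hK] at h1
    exact h1
  have hFs : Summable F := by
    refine Summable.of_nonneg_of_le hF0 ?_ hg
    intro w
    have hY : zbra (w - v) ^ ((2:ℝ) - d) ≤ 1 :=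
      Real.rpow_le_one_of_one_le_of_nonpos (one_le_zbra _) he
    have hZ : zbra (w - u) ^ ((2:ℝ) - d) ≤ 1 :=
      Real.rpow_le_one_of_one_le_of_nonpos (one_le_zbra _) he
    have hX0 : 0 ≤ zbra w ^ ((4:ℝ) - 2*d) := Real.rpow_nonneg (zbra_pos w).le _
    have hY0 : 0 ≤ zbra (w - v) ^ ((2:ℝ) - d) := Real.rpow_nonneg (zbra_pos _).le _
    calc F w ≤ zbra w ^ ((4:ℝ) - 2*d) * zbra (w - v) ^ ((2:ℝ) - d) :=
        mul_le_of_le_one_right (mul_nonneg hX0 hY0) hZ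
      _ ≤ zbra w ^ ((4:ℝ) - 2*d) := mul_le_of_le_one_right hX0 hY
  refine ⟨hFs, ?_⟩
  have hB : Summable (fun w : Fin d → ℤ => K * zbra v ^ ((2:ℝ) - d) * zbra u ^ ((2:ℝ) - d) *
      (zbra w ^ ((4:ℝ) - 2*d) + zbra (w - v) ^ ((4:ℝ) - 2*d) + zbra (w - u) ^ ((4:ℝ) - 2*d))) :=
    ((hg.add hgv).add hgu).mul_left _
  have h5 := Summable.tsum_le_tsum hbd hFs hB
  rw [tsum_mul_left] at h5
  have h6 : (∑' w : Fin d → ℤ, (zbra w ^ ((4:ℝ) - 2*d) + zbra (w - v) ^ ((4:ℝ) - 2*d)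
      + zbra (w - u) ^ ((4:ℝ) - 2*d))) = S + S + S := by
    rw [Summable.tsum_add (hg.add hgv) hgu, Summable.tsum_add hg hgv]
    congr 1
    · congr 1
      exact tsum_shift (fun w => zbra w ^ ((4:ℝ) - 2*d)) v
    · exact tsum_shift (fun w => zbra w ^ ((4:ℝ) - 2*d)) u
  rw [h6] at h5
  have hP : 0 < zbra v ^ ((2:ℝ) - d) := Real.rpow_pos_of_pos (zbra_pos v) _
  have hQ : 0 < zbra u ^ ((2:ℝ) - d) := Real.rpow_pos_of_pos (zbra_pos u) _
  calc (∑' w, F w) ≤ K * zbra v ^ ((2:ℝ) - d) * zbra u ^ ((2:ℝ) - d) * (S + S + S) := h5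
    _ ≤ K * (3*S + 1) * zbra v ^ ((2:ℝ) - d) * zbra u ^ ((2:ℝ) - d) := by
        nlinarith [mul_pos (mul_pos hKpos hP) hQ]
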